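/- The vertices of the cycle polytope P(G) of a directed multigraph G are exactly the vectors e_C for C a simple cycle of G; in particular, distinct simple cycles give distinct vertices. -/

import Mathlib

open Filter Finset

variable {V E : Type*}

/-- A (non-empty) closed directed walk in the directed multigraph with edge-source map `src`
and edge-target map `tgt`: a nonempty list of edges in which the target of each edge is the
source of the next, and the target of the last edge is the source of the first. -/
def IsCycleWalk (src tgt : E → V) (c : List E) : Prop :=
  c ≠ [] ∧ c.Chain' (fun a b => tgt a = src b) ∧ c.getLast?.map tgt = c.head?.map src

/-- A simple cycle: a closed directed walk that does not repeat vertices. -/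
def IsSimpleCycle (src tgt : E → V) (c : List E) : Prop :=
  IsCycleWalk src tgt c ∧ (c.map src).Nodup

section Aux
variable {src tgt : E → V}

lemma getElem_idx_congr {α : Type*} (l : List α) {i j : ℕ} (hij : i = j) {hi : i < l.length} :
    l[i] = getElem l j (hij ▸ hi) := by subst hij; rfl

lemma cyc_get {l : List E} (hc : IsCycleWalk src tgt l) (i : ℕ) (h : i < l.length) :
    tgt l[i] = src (getElem l ((i + 1) % l.length) (Nat.mod_lt _ (by omega))) := by
  obtain ⟨hne, hchain, hwrap⟩ := hc
  rcases lt_or_ge (i + 1) l.length with h1 | h1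
  · have hmod : (i + 1) % l.length = i + 1 := Nat.mod_eq_of_lt h1
    have := List.isChain_iff_getElem.mp hchain i (by omega)
    simp only [hmod]
    exact this
  · have hi : i = l.length - 1 := by omega
    have hmod : (i + 1) % l.length = 0 := by
      have : i + 1 = l.length := by omega
      simp [this]
    rw [List.getLast?_eq_getElem?, List.head?_eq_getElem?] at hwrap
    rw [List.getElem?_eq_getElem (show l.length - 1 < l.length by omega),
      List.getElem?_eq_getElem (show 0 < l.length by omega)] at hwrap
    simp only [Option.map_some] at hwrap
    have hwrap' : tgt (getElem l (l.length - 1) (by omega)) = src (getElem l 0 (by omega)) :=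
      Option.some.inj hwrap
    simp only [hmod]
    subst hi
    exact hwrap'

lemma isCycleWalk_of {l : List E} (hne : l ≠ [])
    (h : ∀ i (hi : i < l.length),
      tgt l[i] = src (getElem l ((i + 1) % l.length) (Nat.mod_lt _ (by omega)))) :
    IsCycleWalk src tgt l := by
  have hlen : 0 < l.length := List.length_pos_iff.mpr hne
  refine ⟨hne, ?_, ?_⟩
  · refine List.isChain_iff_getElem.mpr ?_
    intro i hi
    have := h i (by omega)
    have hmod : (i + 1) % l.length = i + 1 := Nat.mod_eq_of_lt (by omega)
    simp only [hmod] at this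
    simpa using this
  · have := h (l.length - 1) (by omega)
    have hmod : (l.length - 1 + 1) % l.length = 0 := by
      have : l.length - 1 + 1 = l.length := by omega
      simp [this]
    simp only [hmod] at this
    rw [List.getLast?_eq_getElem?, List.head?_eq_getElem?,
      List.getElem?_eq_getElem (show l.length - 1 < l.length by omega),
      List.getElem?_eq_getElem hlen]
    simp [this]

lemma IsSimpleCycle.rotate {l : List E} (hc : IsSimpleCycle src tgt l) (r : ℕ) :
    IsSimpleCycle src tgt (l.rotate r) := by
  obtain ⟨hw, hnd⟩ := hc
  have hne := hw.1
  have hlen : 0 < l.length := List.length_pos_iff.mpr hne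
  refine ⟨isCycleWalk_of ?_ ?_, ?_⟩
  · intro hcon
    have h0 := List.length_rotate l r
    rw [hcon] at h0
    simp at h0
    omega
  · intro i hi
    have hlenr : (l.rotate r).length = l.length := List.length_rotate l r
    rw [List.getElem_rotate, List.getElem_rotate]
    have h1 := cyc_get hw ((i + r) % l.length) (Nat.mod_lt _ hlen)
    have hidx : ((i + r) % l.length + 1) % l.length
        = ((i + 1) % (l.rotate r).length + r) % l.length := by
      rw [hlenr, Nat.mod_add_mod, Nat.mod_add_mod]
      ring_nf
    rw [h1, getElem_idx_congr l hidx]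
  · rw [List.map_rotate]
    exact List.nodup_rotate.mpr hnd

lemma cycle_eq_of_subset_of_head {l₁ l₂ : List E}
    (h₁ : IsSimpleCycle src tgt l₁) (h₂ : IsSimpleCycle src tgt l₂)
    (hsub : ∀ e ∈ l₂, e ∈ l₁)
    (hl₁ : 0 < l₁.length) (hl₂ : 0 < l₂.length)
    (hh : getElem l₁ 0 hl₁ = getElem l₂ 0 hl₂) : l₂ = l₁ := by
  have srcinj : ∀ i j (hi : i < l₁.length) (hj : j < l₁.length),
      src l₁[i] = src l₁[j] → i = j := by
    intro i j hi hj hij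
    have hm : getElem (l₁.map src) i (by simpa using hi)
        = getElem (l₁.map src) j (by simpa using hj) := by
      rw [List.getElem_map, List.getElem_map]; exact hij
    exact (h₁.2.getElem_inj_iff).mp hm
  have nd₂ : l₂.Nodup := List.Nodup.of_map src h₂.2
  have claim : ∀ i (hi : i < l₂.length), ∃ h : i < l₁.length, l₂[i] = l₁[i] := by
    intro i
    induction i with
    | zero => intro _; exact ⟨hl₁, hh.symm⟩
    | succ i ih =>
      intro hi
      obtain ⟨hi1, heq⟩ := ih (by omega)
      have h2 := cyc_get h₂.1 i (by omega)
      have hm2 : (i + 1) % l₂.length = i + 1 := Nat.mod_eq_of_lt hi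
      rw [getElem_idx_congr l₂ hm2] at h2
      have h1 := cyc_get h₁.1 i hi1
      have key : src l₂[i + 1] = src (getElem l₁ ((i + 1) % l₁.length) (Nat.mod_lt _ (by omega))) := by
        rw [← h2, heq, h1]
      obtain ⟨j, hj, hje⟩ := List.getElem_of_mem (hsub _ (List.getElem_mem hi))
      have hj' : j = (i + 1) % l₁.length := by
        apply srcinj j _ hj (Nat.mod_lt _ (by omega))
        rw [hje]; exact key
      rcases lt_or_ge (i + 1) l₁.length with hlt | hge
      · have hje2 : j = i + 1 := by
          rw [hj', Nat.mod_eq_of_lt hlt]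
        subst hje2
        exact ⟨hlt, hje.symm⟩
      · exfalso
        have hieq : i + 1 = l₁.length := by omega
        have hje2 : j = 0 := by
          rw [hj', hieq]; simp
        subst hje2
        have hc20 : l₂[i + 1] = getElem l₂ 0 (by omega) := by
          rw [← hje, hh]
        have := (nd₂.getElem_inj_iff).mp hc20
        omega
  have hlen_le : l₂.length ≤ l₁.length := by
    by_contra hcon
    obtain ⟨h, -⟩ := claim l₁.length (by omega)
    omega
  have hlen_eq : l₂.length = l₁.length := by
    by_contra hne
    have hlt : l₂.length < l₁.length := by omega
    have h2 := cyc_get h₂.1 (l₂.length - 1) (by omega)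
    have hmod2 : (l₂.length - 1 + 1) % l₂.length = 0 := by
      have h' : l₂.length - 1 + 1 = l₂.length := by omega
      simp [h']
    rw [getElem_idx_congr l₂ hmod2] at h2
    obtain ⟨hml, heq⟩ := claim (l₂.length - 1) (by omega)
    have h1 := cyc_get h₁.1 (l₂.length - 1) (by omega)
    have hmod1 : (l₂.length - 1 + 1) % l₁.length = l₂.length := by
      have h' : l₂.length - 1 + 1 = l₂.length := by omega
      rw [h']; exact Nat.mod_eq_of_lt hlt
    rw [getElem_idx_congr l₁ hmod1] at h1
    have key : src (getElem l₁ l₂.length hlt) = src (getElem l₁ 0 hl₁) := by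
      rw [← h1, ← heq, h2, hh]
    have := srcinj l₂.length 0 hlt hl₁ key
    omega
  apply List.ext_getElem hlen_eq
  intro n hn1 hn2
  exact (claim n hn1).choose_spec

lemma rotate_of_subset {l₁ l₂ : List E}
    (h₁ : IsSimpleCycle src tgt l₁) (h₂ : IsSimpleCycle src tgt l₂)
    (hsub : ∀ e ∈ l₂, e ∈ l₁) : ∃ r, l₂ = l₁.rotate r := by
  have hl₂ : 0 < l₂.length := List.length_pos_iff.mpr h₂.1.1
  have hl₁ : 0 < l₁.length := List.length_pos_iff.mpr h₁.1.1
  obtain ⟨r, hr, hre⟩ := List.getElem_of_mem (hsub _ (List.getElem_mem hl₂))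
  have hlr : 0 < (l₁.rotate r).length := by simpa using hl₁
  have hhead : getElem (l₁.rotate r) 0 hlr = getElem l₂ 0 hl₂ := by
    rw [List.getElem_rotate]
    have h0 : (0 + r) % l₁.length = r := by
      rw [Nat.zero_add]; exact Nat.mod_eq_of_lt hr
    rw [getElem_idx_congr l₁ h0]
    exact hre
  exact ⟨r, (cycle_eq_of_subset_of_head (h₁.rotate r) h₂
    (fun e he => List.mem_rotate.mpr (hsub e he)) hlr hl₂ hhead)⟩

end Aux

/-- The normalized incidence vector `e_C` of a cycle `C`:
its coordinate at an edge `e` is (number of occurrences of `e` in `C`)/|C|. -/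
noncomputable def cycleVec [DecidableEq E] (c : List E) : E → ℝ :=
  fun e => (c.count e : ℝ) / (c.length : ℝ)

/-- The cycle polytope of a directed multigraph: the convex hull of the normalized incidence
vectors of its simple cycles. -/
noncomputable def cyclePolytope [DecidableEq E] (src tgt : E → V) : Set (E → ℝ) :=
  convexHull ℝ { x | ∃ c, IsSimpleCycle src tgt c ∧ x = cycleVec c }

section Aux2
variable {src tgt : E → V} [DecidableEq E]

lemma cycleVec_rotate (l : List E) (r : ℕ) : cycleVec (l.rotate r) = cycleVec l := by
  funext e
  unfold cycleVec
  rw [(List.rotate_perm l r).count_eq, List.length_rotate]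

lemma cycleVec_nonneg (l : List E) (e : E) : 0 ≤ cycleVec l e :=
  div_nonneg (by positivity) (by positivity)

lemma cycleVec_eq_zero {l : List E} (hl : l ≠ []) {e : E} :
    cycleVec l e = 0 ↔ e ∉ l := by
  have hlen : 0 < l.length := List.length_pos_iff.mpr hl
  unfold cycleVec
  rw [div_eq_zero_iff]
  constructor
  · rintro (h | h)
    · have : l.count e = 0 := by exact_mod_cast h
      exact List.count_eq_zero.mp this
    · exfalso
      have : l.length = 0 := by exact_mod_cast h
      omega
  · intro h
    left
    exact_mod_cast List.count_eq_zero.mpr h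

lemma hull_nonneg {x : E → ℝ} (hx : x ∈ cyclePolytope src tgt) (e : E) : 0 ≤ x e := by
  have hconv : Convex ℝ {y : E → ℝ | ∀ e, 0 ≤ y e} := by
    intro a ha b hb s t hs ht hst e
    have := add_nonneg (mul_nonneg hs (ha e)) (mul_nonneg ht (hb e))
    simpa using this
  have hmem : x ∈ {y : E → ℝ | ∀ e, 0 ≤ y e} := by
    refine convexHull_min ?_ hconv hx
    rintro y ⟨l, -, rfl⟩ e
    exact cycleVec_nonneg l e
  exact hmem e

lemma eq_cycleVec_of_support {l : List E}
    (hl : IsSimpleCycle src tgt l) {x : E → ℝ}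
    (hx : x ∈ cyclePolytope src tgt) (hsupp : ∀ e, e ∉ l → x e = 0) :
    x = cycleVec l := by
  rw [cyclePolytope, _root_.convexHull_eq] at hx
  obtain ⟨ι, t, w, z, hw0, hw1, hzS, hx⟩ := hx
  rw [Finset.centerMass_eq_of_sum_1 _ _ hw1] at hx
  have hz : ∀ i ∈ t, w i • z i = w i • cycleVec l := by
    intro i hi
    rcases eq_or_ne (w i) 0 with h0 | h0
    · simp [h0]
    obtain ⟨li, hli, hzi⟩ := hzS i hi
    have hsub : ∀ e ∈ li, e ∈ l := by
      intro e he
      by_contra hne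
      have hxe : x e = 0 := hsupp e hne
      rw [← hx] at hxe
      have hxe' : ∑ j ∈ t, w j * z j e = 0 := by
        simpa using hxe
      have hterm : w i * z i e = 0 := by
        have := (Finset.sum_eq_zero_iff_of_nonneg ?_).mp hxe' i hi
        · exact this
        · intro j hj
          obtain ⟨lj, hlj, hzj⟩ := hzS j hj
          exact mul_nonneg (hw0 j hj) (hzj ▸ cycleVec_nonneg lj e)
      have hzi0 : z i e = 0 := by
        rcases mul_eq_zero.mp hterm with h | h
        · exact absurd h h0
        · exact h
      rw [hzi] at hzi0
      rw [cycleVec_eq_zero hli.1.1] at hzi0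
      exact hzi0 he
    obtain ⟨r, hr⟩ := rotate_of_subset hl hli hsub
    rw [hzi, hr, cycleVec_rotate]
  rw [← hx, Finset.sum_congr rfl hz, ← Finset.sum_smul, hw1, one_smul]

end Aux2


/-- The vertices (extreme points) of the cycle polytope are exactly the normalized incidence
vectors `e_C` of simple cycles `C`; moreover distinct simple cycles (i.e. cycles that are not
rotations of each other) give distinct vertices. -/
theorem cyclePolytope_extremePoints [DecidableEq E] (src tgt : E → V) :
    (∀ x : E → ℝ,
        x ∈ Set.extremePoints ℝ (cyclePolytope src tgt) ↔
          ∃ c, IsSimpleCycle src tgt c ∧ x = cycleVec c) ∧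
    ∀ c₁ c₂ : List E, IsSimpleCycle src tgt c₁ → IsSimpleCycle src tgt c₂ →
      cycleVec c₁ = cycleVec c₂ → ∃ r : ℕ, c₂ = c₁.rotate r := by
  constructor
  · intro x
    constructor
    · intro hx
      exact extremePoints_convexHull_subset
        (A := { y | ∃ c, IsSimpleCycle src tgt c ∧ y = cycleVec c }) hx
    · rintro ⟨l, hl, rfl⟩
      rw [mem_extremePoints]
      refine ⟨subset_convexHull ℝ _ ⟨l, hl, rfl⟩, ?_⟩
      intro x₁ hx₁ x₂ hx₂ hseg
      obtain ⟨a, b, ha, hb, hab, habx⟩ := hseg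
      have hzero : ∀ e, e ∉ l → x₁ e = 0 ∧ x₂ e = 0 := by
        intro e he
        have hv : cycleVec l e = 0 := (cycleVec_eq_zero hl.1.1).mpr he
        have h1 := hull_nonneg hx₁ e
        have h2 := hull_nonneg hx₂ e
        have hsum : a * x₁ e + b * x₂ e = 0 := by
          have := congrFun habx e
          simpa [hv] using this
        constructor <;> nlinarith
      exact ⟨eq_cycleVec_of_support hl hx₁ (fun e he => (hzero e he).1),
        eq_cycleVec_of_support hl hx₂ (fun e he => (hzero e he).2)⟩
  · intro c₁ c₂ h₁ h₂ hvec
    apply rotate_of_subset h₁ h₂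
    intro e he
    by_contra hne
    have h1 : cycleVec c₁ e = 0 := (cycleVec_eq_zero h₁.1.1).mpr hne
    rw [hvec, cycleVec_eq_zero h₂.1.1] at h1
    exact h1 he
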